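/- Let A be a closed linear sublattice of C_b(X) (closed under pointwise maximum and minimum). Then the following conditions are equivalent: (A2) for every closed set F ⊆ X and every x ∈ X∖F there exists g ∈ A with g(x) = 1 and g = 0 on F; (A3) for every nonnegative f ∈ C_b(X) and every x ∈ X, f(x) = sup{ g(x) : g ∈ A, 0 ≤ g ≤ f }; (A4) for every nonnegative f ∈ C_b(X) there exists a sequence (g_j) of nonnegative elements of A with g_j increasing pointwise to f; (A5) the sets {x ∈ X : g(x) > 0}, g ∈ A, form a base of the topology of X. -/

import Mathlib

open MeasureTheory Filter Topology BoundedContinuousFunction ENNReal NNReal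

noncomputable section

namespace AMPaper

variable (X : Type*) [TopologicalSpace X] [MeasurableSpace X]

/-- The topology `τ_b` on the space of finite nonnegative Borel measures:
the weak topology induced by the pairings `μ ↦ ∫ g dμ`, `g ∈ C_b(X)`. -/
def taub : TopologicalSpace (FiniteMeasure X) :=
  ⨅ g : X →ᵇ ℝ,
    TopologicalSpace.induced (fun μ : FiniteMeasure X => ∫ x, g x ∂(μ : Measure X)) inferInstance

/-- The topology `τ_A` induced by the pairings with functions from `A ⊆ C_b(X)`. -/
def tauA (A : Set (X →ᵇ ℝ)) : TopologicalSpace (FiniteMeasure X) :=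
  ⨅ g ∈ A,
    TopologicalSpace.induced (fun μ : FiniteMeasure X => ∫ x, g x ∂(μ : Measure X)) inferInstance

variable {X}

/-- A closed linear sublattice of `C_b(X)`. -/
structure IsClosedSublattice (A : Set (X →ᵇ ℝ)) : Prop where
  isClosed : IsClosed A
  zero_mem : (0 : X →ᵇ ℝ) ∈ A
  add_mem : ∀ ⦃f g : X →ᵇ ℝ⦄, f ∈ A → g ∈ A → f + g ∈ A
  smul_mem : ∀ (c : ℝ) ⦃f : X →ᵇ ℝ⦄, f ∈ A → c • f ∈ A
  sup_mem : ∀ ⦃f g h : X →ᵇ ℝ⦄, f ∈ A → g ∈ A → (∀ x, h x = max (f x) (g x)) → h ∈ A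
  inf_mem : ∀ ⦃f g h : X →ᵇ ℝ⦄, f ∈ A → g ∈ A → (∀ x, h x = min (f x) (g x)) → h ∈ A

/-- An acceptable subspace of `C_b(X)`: a closed linear sublattice satisfying
the separation property (A2). -/
structure IsAcceptable (A : Set (X →ᵇ ℝ)) extends IsClosedSublattice A : Prop where
  sep : ∀ F : Set X, IsClosed F → ∀ x ∉ F, ∃ g ∈ A,
    (∀ y, 0 ≤ g y) ∧ (∀ y, g y ≤ 1) ∧ g x = 1 ∧ ∀ y ∈ F, g y = 0

/-- A lower semicontinuous `ρ : X → [0,∞]` is admissible for `E` if `∫ ρ dμ ≥ 1` for all `μ ∈ E`. -/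
def AdmissibleFun (ρ : X → ℝ≥0∞) (E : Set (FiniteMeasure X)) : Prop :=
  LowerSemicontinuous ρ ∧ ∀ μ ∈ E, 1 ≤ ∫⁻ x, ρ x ∂(μ : Measure X)

/-- The `M_p` modulus of a family of measures. -/
def Mmod (p : ℝ) (m : Measure X) (E : Set (FiniteMeasure X)) : ℝ≥0∞ :=
  ⨅ (ρ : X → ℝ≥0∞) (_ : AdmissibleFun ρ E), ∫⁻ x, ρ x ^ p ∂m

/-- The continuous modulus `M_{p,c}^A`, with test functions nonnegative elements of `A`. -/
def McMod (p : ℝ) (A : Set (X →ᵇ ℝ)) (m : Measure X) (E : Set (FiniteMeasure X)) : ℝ≥0∞ :=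
  ⨅ (g : X →ᵇ ℝ) (_ : g ∈ A ∧ (∀ x, 0 ≤ g x) ∧
      ∀ μ ∈ E, 1 ≤ ∫⁻ x, ENNReal.ofReal (g x) ∂(μ : Measure X)),
    ∫⁻ x, ENNReal.ofReal (g x) ^ p ∂m

/-- A sequence of lower semicontinuous functions `ρ_j : X → [0,∞]` is an admissible sequence
for `E` if `liminf_j ∫ ρ_j dμ ≥ 1` for all `μ ∈ E`. -/
def AdmissibleSeq (ρ : ℕ → X → ℝ≥0∞) (E : Set (FiniteMeasure X)) : Prop :=
  (∀ j, LowerSemicontinuous (ρ j)) ∧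
    ∀ μ ∈ E, 1 ≤ Filter.liminf (fun j => ∫⁻ x, ρ j x ∂(μ : Measure X)) Filter.atTop

/-- The approximation modulus `AM_p` of a family of measures. -/
def AMmod (p : ℝ) (m : Measure X) (E : Set (FiniteMeasure X)) : ℝ≥0∞ :=
  ⨅ (ρ : ℕ → X → ℝ≥0∞) (_ : AdmissibleSeq ρ E),
    Filter.liminf (fun j => ∫⁻ x, ρ j x ^ p ∂m) Filter.atTop

/-- The continuous approximation modulus `AM_{p,c}^A`. -/
def AMcMod (p : ℝ) (A : Set (X →ᵇ ℝ)) (m : Measure X) (E : Set (FiniteMeasure X)) : ℝ≥0∞ :=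
  ⨅ (g : ℕ → X →ᵇ ℝ) (_ : (∀ j, g j ∈ A ∧ ∀ x, 0 ≤ g j x) ∧
      ∀ μ ∈ E, 1 ≤ Filter.liminf
        (fun j => ∫⁻ x, ENNReal.ofReal (g j x) ∂(μ : Measure X)) Filter.atTop),
    Filter.liminf (fun j => ∫⁻ x, ENNReal.ofReal (g j x) ^ p ∂m) Filter.atTop

/-- The `L^q(m)`-norm of a function `f : X → [0,∞]`. -/
def lqNorm (q : ℝ≥0∞) (m : Measure X) (f : X → ℝ≥0∞) : ℝ≥0∞ :=
  if q = ∞ then essSup f m else (∫⁻ x, f x ^ q.toReal ∂m) ^ (1 / q.toReal)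

variable (X) in
/-- The `p`-content (depending on `p` only through the conjugate exponent `q`):
the supremum of the outer measures `η*(E)` over all plans `η` — finite Borel measures on
`(M^+(X), τ_b)` — whose barycenter `η^#` is absolutely continuous w.r.t. `m` with density
of `L^q(m)`-norm at most `1`. -/
def Ct (q : ℝ≥0∞) (m : Measure X) (E : Set (FiniteMeasure X)) : ℝ≥0∞ :=
  ⨆ (η : @Measure (FiniteMeasure X) (@borel (FiniteMeasure X) (taub X)))
    (_ : η Set.univ < ∞ ∧ ∃ f : X → ℝ≥0∞, Measurable f ∧
      (∀ B : Set X, MeasurableSet B → (∫⁻ μ, (μ : Measure X) B ∂η) = ∫⁻ x in B, f x ∂m) ∧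
      lqNorm q m f ≤ 1),
    η E


section AuxLemmas
variable {Y : Type*} [TopologicalSpace Y]

/-- Cap lemma: from (A2) we get nonnegative functions bounded by 1. -/
lemma cap_lemma {A : Set (Y →ᵇ ℝ)} (hA : IsClosedSublattice A)
    (h2 : ∀ F : Set Y, IsClosed F → ∀ x ∉ F, ∃ g ∈ A, g x = 1 ∧ ∀ y ∈ F, g y = 0)
    {F : Set Y} (hF : IsClosed F) {x : Y} (hx : x ∉ F) {δ : ℝ} (hδ : 0 < δ) :
    ∃ g ∈ A, (∀ y, 0 ≤ g y ∧ g y ≤ 1) ∧ (1 + δ)⁻¹ ≤ g x ∧ ∀ y ∈ F, g y = 0 := by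
  have hδ1 : (0:ℝ) < 1 + δ := by linarith
  obtain ⟨g₀, hg₀A, hg₀x, hg₀F⟩ := h2 F hF x hx
  set g₁ : Y →ᵇ ℝ := g₀ ⊔ 0 with hg₁def
  have hg₁A : g₁ ∈ A := hA.sup_mem hg₀A hA.zero_mem fun y => rfl
  have hg₁x : g₁ x = 1 := by
    show max (g₀ x) 0 = 1
    rw [hg₀x]; norm_num
  have hg₁F : ∀ y ∈ F, g₁ y = 0 := fun y hy => by
    show max (g₀ y) 0 = 0
    rw [hg₀F y hy]; norm_num
  have hg₁0 : ∀ y, 0 ≤ g₁ y := fun y => le_max_right _ _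
  set K : Set Y := {y | 1 + δ ≤ g₁ y} with hKdef
  have hKc : IsClosed K := isClosed_le continuous_const g₁.continuous
  have hxK : x ∉ K := by
    simp only [hKdef, Set.mem_setOf_eq, hg₁x, not_le]
    linarith
  obtain ⟨g₂', hg₂'A, hg₂'x, hg₂'F⟩ := h2 (K ∪ F) (hKc.union hF) x
    (by simp [hxK, hx])
  set g₂ : Y →ᵇ ℝ := g₂' ⊔ 0 with hg₂def
  have hg₂A : g₂ ∈ A := hA.sup_mem hg₂'A hA.zero_mem fun y => rfl
  have hg₂x : g₂ x = 1 := by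
    show max (g₂' x) 0 = 1
    rw [hg₂'x]; norm_num
  have hg₂0 : ∀ y, 0 ≤ g₂ y := fun y => le_max_right _ _
  have hg₂K : ∀ y ∈ K, g₂ y = 0 := fun y hy => by
    show max (g₂' y) 0 = 0
    rw [hg₂'F y (Or.inl hy)]; norm_num
  set h : Y →ᵇ ℝ := g₁ ⊓ ((1 + δ) • g₂) with hhdef
  have hhA : h ∈ A := hA.inf_mem hg₁A (hA.smul_mem _ hg₂A) fun y => rfl
  have hhy : ∀ y, h y = min (g₁ y) ((1 + δ) * g₂ y) := fun y => rfl
  have hh0 : ∀ y, 0 ≤ h y := fun y => by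
    rw [hhy]
    exact le_min (hg₁0 y) (mul_nonneg hδ1.le (hg₂0 y))
  have hhle : ∀ y, h y ≤ 1 + δ := fun y => by
    rcases le_or_gt (1 + δ) (g₁ y) with hy | hy
    · have : g₂ y = 0 := hg₂K y hy
      rw [hhy, this]
      simp only [mul_zero]
      exact (min_le_right _ _).trans (by linarith)
    · exact ((hhy y) ▸ min_le_left _ _).trans hy.le
  have hhx : h x = 1 := by
    rw [hhy, hg₁x, hg₂x, mul_one]
    exact min_eq_left (by linarith)
  have hhF : ∀ y ∈ F, h y = 0 := fun y hy => by
    rw [hhy, hg₁F y hy]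
    exact min_eq_left (mul_nonneg hδ1.le (hg₂0 y))
  refine ⟨(1 + δ)⁻¹ • h, hA.smul_mem _ hhA, fun y => ?_, ?_, fun y hy => ?_⟩
  · constructor
    · show 0 ≤ (1 + δ)⁻¹ * h y
      exact mul_nonneg (by positivity) (hh0 y)
    · show (1 + δ)⁻¹ * h y ≤ 1
      rw [inv_mul_le_iff₀ hδ1]
      simpa using hhle y
  · show (1 + δ)⁻¹ ≤ (1 + δ)⁻¹ * h x
    rw [hhx, mul_one]
  · show (1 + δ)⁻¹ * h y = 0
    rw [hhF y hy, mul_zero]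


lemma a2_to_a3 {A : Set (Y →ᵇ ℝ)} (hA : IsClosedSublattice A)
    (h2 : ∀ F : Set Y, IsClosed F → ∀ x ∉ F, ∃ g ∈ A, g x = 1 ∧ ∀ y ∈ F, g y = 0) :
    ∀ f : Y →ᵇ ℝ, (∀ x, 0 ≤ f x) → ∀ x : Y,
      IsLUB {r : ℝ | ∃ g ∈ A, (∀ y, 0 ≤ g y ∧ g y ≤ f y) ∧ g x = r} (f x) := by
  intro f hf x
  constructor
  · rintro r ⟨g, hgA, hgle, rfl⟩
    exact (hgle x).2
  · intro b hb
    have hb0 : (0:ℝ) ≤ b := hb ⟨0, hA.zero_mem, fun y => ⟨le_refl 0, hf y⟩, rfl⟩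
    refine le_of_forall_pos_le_add fun ε hε => ?_
    rcases le_or_gt (f x) ε with hc | hc
    · linarith
    · set c : ℝ := f x - ε / 2 with hcdef
      have hc0 : 0 < c := by simp only [hcdef]; linarith
      set F : Set Y := {y | f y ≤ c} with hFdef
      have hF : IsClosed F := isClosed_le f.continuous continuous_const
      have hxF : x ∉ F := by
        simp only [hFdef, Set.mem_setOf_eq, not_le, hcdef]
        linarith
      have hδ : (0:ℝ) < ε / (2 * c) := by positivity
      obtain ⟨g, hgA, hg01, hgx, hgF⟩ := cap_lemma hA h2 hF hxF hδ
      set δ : ℝ := ε / (2 * c) with hδdef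
      have hδ1 : (0:ℝ) < 1 + δ := by linarith
      have hmem : (c • g) x ∈ {r : ℝ | ∃ g ∈ A, (∀ y, 0 ≤ g y ∧ g y ≤ f y) ∧ g x = r} := by
        refine ⟨c • g, hA.smul_mem _ hgA, fun y => ⟨?_, ?_⟩, rfl⟩
        · exact mul_nonneg hc0.le (hg01 y).1
        · rcases le_or_gt (f y) c with hy | hy
          · have : g y = 0 := hgF y hy
            show c * g y ≤ f y
            rw [this, mul_zero]
            exact hf y
          · show c * g y ≤ f y
            calc c * g y ≤ c * 1 := mul_le_mul_of_nonneg_left (hg01 y).2 hc0.le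
            _ ≤ f y := by linarith
      have hbb : (c • g) x ≤ b := hb hmem
      have hval : c * (1 + δ)⁻¹ ≤ (c • g) x := by
        show c * (1 + δ)⁻¹ ≤ c * g x
        exact mul_le_mul_of_nonneg_left hgx hc0.le
      have hinv : 1 - δ ≤ (1 + δ)⁻¹ := by
        nlinarith [mul_inv_cancel₀ hδ1.ne', inv_pos.2 hδ1, sq_nonneg δ]
      have hcd : c * δ = ε / 2 := by
        rw [hδdef]
        field_simp
      nlinarith [mul_le_mul_of_nonneg_left hinv hc0.le]


lemma a3_to_a4 [SecondCountableTopology Y] {A : Set (Y →ᵇ ℝ)} (hA : IsClosedSublattice A)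
    (h3 : ∀ f : Y →ᵇ ℝ, (∀ x, 0 ≤ f x) → ∀ x : Y,
      IsLUB {r : ℝ | ∃ g ∈ A, (∀ y, 0 ≤ g y ∧ g y ≤ f y) ∧ g x = r} (f x)) :
    ∀ f : Y →ᵇ ℝ, (∀ x, 0 ≤ f x) → ∃ g : ℕ → Y →ᵇ ℝ,
      (∀ j, g j ∈ A) ∧ (∀ j x, 0 ≤ g j x) ∧ (∀ x, Monotone fun j => g j x) ∧
      (∀ x, Tendsto (fun j => g j x) atTop (𝓝 (f x))) := by
  intro f hf
  set S : Set (Y →ᵇ ℝ) := {g | g ∈ A ∧ ∀ y, 0 ≤ g y ∧ g y ≤ f y} with hSdef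
  have h0S : (0 : Y →ᵇ ℝ) ∈ S := ⟨hA.zero_mem, fun y => ⟨le_refl 0, hf y⟩⟩
  -- For each n, a countable subfamily of S whose "large sets" at scale 1/(n+1) cover Y
  have hcov : ∀ n : ℕ, ∃ T : Set S, T.Countable ∧
      ∀ x : Y, ∃ g ∈ T, f x - 1 / (n + 1) < (g : Y →ᵇ ℝ) x := by
    intro n
    obtain ⟨T, hTc, hTu⟩ := TopologicalSpace.isOpen_iUnion_countable
      (fun g : S => {x : Y | f x - 1 / (n + 1) < (g : Y →ᵇ ℝ) x})
      (fun g => isOpen_lt (f.continuous.sub continuous_const) (g : Y →ᵇ ℝ).continuous)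
    refine ⟨T, hTc, fun x => ?_⟩
    have hxmem : x ∈ ⋃ g : S, {x : Y | f x - 1 / (n + 1) < (g : Y →ᵇ ℝ) x} := by
      have hlt : f x - 1 / (n + 1) < f x := by
        have : (0:ℝ) < 1 / (n + 1) := by positivity
        linarith
      obtain ⟨r, ⟨g, hgA, hgb, rfl⟩, hr, -⟩ := (h3 f hf x).exists_between hlt
      exact Set.mem_iUnion.2 ⟨⟨g, hgA, hgb⟩, hr⟩
    rw [← hTu] at hxmem
    simpa using hxmem
  choose T hTc hTcov using hcov
  set U : Set (Y →ᵇ ℝ) := insert 0 (Subtype.val '' ⋃ n, T n) with hUdef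
  have hUc : U.Countable :=
    ((Set.countable_iUnion hTc).image _).insert _
  have hUS : U ⊆ S := by
    rintro g (rfl | ⟨⟨g', hg'S⟩, -, rfl⟩)
    · exact h0S
    · exact hg'S
  obtain ⟨u, hu⟩ := Set.Countable.exists_surjective ⟨0, Set.mem_insert _ _⟩ hUc
  set v : ℕ → Y →ᵇ ℝ := fun k => ((u k : U) : Y →ᵇ ℝ) with hvdef
  have hvS : ∀ k, v k ∈ S := fun k => hUS (u k).2
  -- partial suprema
  set G : ℕ → Y →ᵇ ℝ := fun j => Nat.rec (v 0) (fun j Gj => Gj ⊔ v (j + 1)) j with hGdef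
  have hGsucc : ∀ j, G (j + 1) = G j ⊔ v (j + 1) := fun j => rfl
  have hGA : ∀ j, G j ∈ A := by
    intro j
    induction j with
    | zero => exact (hvS 0).1
    | succ j ih => exact hA.sup_mem ih (hvS (j + 1)).1 fun y => rfl
  have hGS : ∀ j y, 0 ≤ G j y ∧ G j y ≤ f y := by
    intro j
    induction j with
    | zero => exact fun y => (hvS 0).2 y
    | succ j ih =>
      intro y
      have h1 := ih y
      have h2 := (hvS (j + 1)).2 y
      constructor
      · exact h1.1.trans (le_max_left _ _)
      · exact max_le h1.2 h2.2
  have hGmono : ∀ x : Y, Monotone fun j => G j x := by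
    intro x
    exact monotone_nat_of_le_succ fun j => le_max_left _ _
  have hvG : ∀ k x, v k x ≤ G k x := by
    intro k x
    cases k with
    | zero => exact le_refl _
    | succ k => exact le_max_right _ _
  refine ⟨G, hGA, fun j x => (hGS j x).1, hGmono, fun x => ?_⟩
  rw [Metric.tendsto_atTop]
  intro ε hε
  obtain ⟨n, hn⟩ := exists_nat_one_div_lt hε
  obtain ⟨g, hgT, hgx⟩ := hTcov n x
  have hgU : (g : Y →ᵇ ℝ) ∈ U :=
    Set.mem_insert_iff.2 (Or.inr ⟨g, Set.mem_iUnion.2 ⟨n, hgT⟩, rfl⟩)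
  obtain ⟨k, hk⟩ := hu ⟨(g : Y →ᵇ ℝ), hgU⟩
  have hvk : v k = (g : Y →ᵇ ℝ) := by rw [hvdef]; simp [hk]
  refine ⟨k, fun j hj => ?_⟩
  have h1 : f x - 1 / (n + 1) < G j x := by
    calc f x - 1 / (n + 1) < v k x := by rw [hvk]; exact hgx
    _ ≤ G k x := hvG k x
    _ ≤ G j x := hGmono x hj
  have h2 : G j x ≤ f x := (hGS j x).2
  rw [Real.dist_eq, abs_of_nonpos (by linarith)]
  have : (1:ℝ) / (n + 1) < ε := hn
  linarith


lemma a4_to_a2 [PolishSpace Y] {A : Set (Y →ᵇ ℝ)} (hA : IsClosedSublattice A)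
    (h4 : ∀ f : Y →ᵇ ℝ, (∀ x, 0 ≤ f x) → ∃ g : ℕ → Y →ᵇ ℝ,
      (∀ j, g j ∈ A) ∧ (∀ j x, 0 ≤ g j x) ∧ (∀ x, Monotone fun j => g j x) ∧
      (∀ x, Tendsto (fun j => g j x) atTop (𝓝 (f x)))) :
    ∀ F : Set Y, IsClosed F → ∀ x ∉ F, ∃ g ∈ A, g x = 1 ∧ ∀ y ∈ F, g y = 0 := by
  intro F hF x hx
  letI := TopologicalSpace.upgradeIsCompletelyMetrizable Y
  obtain ⟨f, hf0, hf1, hficc⟩ := exists_bounded_zero_one_of_closed hF isClosed_singleton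
    (Set.disjoint_singleton_right.2 hx)
  obtain ⟨g, hgA, hg0, hgmono, hgT⟩ := h4 f (fun y => (hficc y).1)
  have hfx : f x = 1 := hf1 rfl
  have hT : Tendsto (fun j => g j x) atTop (𝓝 (1:ℝ)) := hfx ▸ hgT x
  obtain ⟨j, hj⟩ := (hT.eventually (eventually_gt_nhds (by norm_num : (0:ℝ) < 1))).exists
  have hjx : 0 < g j x := hj
  have hgle : ∀ y, g j y ≤ f y := by
    intro y
    refine ge_of_tendsto (hgT y) (eventually_atTop.2 ⟨j, fun k hk => ?_⟩)
    exact hgmono y hk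
  refine ⟨(g j x)⁻¹ • g j, hA.smul_mem _ (hgA j), ?_, fun y hy => ?_⟩
  · show (g j x)⁻¹ * g j x = 1
    exact inv_mul_cancel₀ hjx.ne'
  · show (g j x)⁻¹ * g j y = 0
    have hfy : f y = 0 := by simpa using hf0 hy
    have h1 : g j y ≤ 0 := hfy ▸ hgle y
    have h2 : g j y = 0 := le_antisymm h1 (hg0 j y)
    rw [h2, mul_zero]

lemma a2_to_a5 {A : Set (Y →ᵇ ℝ)} (hA : IsClosedSublattice A)
    (h2 : ∀ F : Set Y, IsClosed F → ∀ x ∉ F, ∃ g ∈ A, g x = 1 ∧ ∀ y ∈ F, g y = 0) :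
    TopologicalSpace.IsTopologicalBasis {U : Set Y | ∃ g ∈ A, U = {x : Y | 0 < g x}} := by
  refine TopologicalSpace.isTopologicalBasis_of_isOpen_of_nhds ?_ ?_
  · rintro u ⟨g, hgA, rfl⟩
    exact isOpen_lt continuous_const g.continuous
  · intro a u hau hu
    obtain ⟨g, hgA, hga, hgF⟩ := h2 uᶜ hu.isClosed_compl a (by simpa using hau)
    refine ⟨{x : Y | 0 < g x}, ⟨g, hgA, rfl⟩, ?_, ?_⟩
    · simp [hga]
    · intro y hy
      by_contra hyu
      have : g y = 0 := hgF y hyu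
      simp only [Set.mem_setOf_eq, this] at hy
      exact lt_irrefl 0 hy

lemma a5_to_a2 {A : Set (Y →ᵇ ℝ)} (hA : IsClosedSublattice A)
    (h5 : TopologicalSpace.IsTopologicalBasis {U : Set Y | ∃ g ∈ A, U = {x : Y | 0 < g x}}) :
    ∀ F : Set Y, IsClosed F → ∀ x ∉ F, ∃ g ∈ A, g x = 1 ∧ ∀ y ∈ F, g y = 0 := by
  intro F hF x hx
  obtain ⟨v, ⟨g, hgA, rfl⟩, hxv, hvu⟩ := h5.exists_subset_of_mem_open
    (show x ∈ Fᶜ from hx) hF.isOpen_compl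
  have hgx : 0 < g x := hxv
  set h : Y →ᵇ ℝ := g ⊔ 0 with hhdef
  have hhA : h ∈ A := hA.sup_mem hgA hA.zero_mem fun y => rfl
  refine ⟨(g x)⁻¹ • h, hA.smul_mem _ hhA, ?_, fun y hy => ?_⟩
  · show (g x)⁻¹ * max (g x) 0 = 1
    rw [max_eq_left hgx.le]
    exact inv_mul_cancel₀ hgx.ne'
  · show (g x)⁻¹ * max (g y) 0 = 0
    have hgy : g y ≤ 0 := by
      by_contra hpos
      push_neg at hpos
      exact (hvu (show y ∈ {x : Y | 0 < g x} from hpos)) hy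
    rw [max_eq_right hgy, mul_zero]

end AuxLemmas

theorem stmt0 {X : Type*} [TopologicalSpace X] [PolishSpace X]
    (A : Set (X →ᵇ ℝ)) (hA : IsClosedSublattice A) :
    List.TFAE
      [ -- (A2)
        ∀ F : Set X, IsClosed F → ∀ x ∉ F, ∃ g ∈ A, g x = 1 ∧ ∀ y ∈ F, g y = 0,
        -- (A3)
        ∀ f : X →ᵇ ℝ, (∀ x, 0 ≤ f x) → ∀ x : X,
          IsLUB {r : ℝ | ∃ g ∈ A, (∀ y, 0 ≤ g y ∧ g y ≤ f y) ∧ g x = r} (f x),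
        -- (A4)
        ∀ f : X →ᵇ ℝ, (∀ x, 0 ≤ f x) → ∃ g : ℕ → X →ᵇ ℝ,
          (∀ j, g j ∈ A) ∧ (∀ j x, 0 ≤ g j x) ∧ (∀ x, Monotone fun j => g j x) ∧
          (∀ x, Tendsto (fun j => g j x) atTop (𝓝 (f x))),
        -- (A5)
        TopologicalSpace.IsTopologicalBasis {U : Set X | ∃ g ∈ A, U = {x : X | 0 < g x}} ] := by
  tfae_have 1 → 2 := a2_to_a3 hA
  tfae_have 2 → 3 := a3_to_a4 hA
  tfae_have 3 → 1 := a4_to_a2 hA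
  tfae_have 1 → 4 := a2_to_a5 hA
  tfae_have 4 → 1 := a5_to_a2 hA
  tfae_finish

end AMPaper

end
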